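/- For the complete bipartite graph K_{m,n} with 3 ≤ m ≤ n, the number of mutual-visibility sets of cardinality i equals: C(m+n, i) for 1 ≤ i ≤ m+1; C(m+n, i) − C(n, i−m) for m+2 ≤ i ≤ n+1; and C(m+n, i) − C(n, i−m) − C(m, i−n) for n+2 ≤ i ≤ m+n−2; and there are no mutual-visibility sets of cardinality exceeding m+n−2. -/

import Mathlib

open SimpleGraph Polynomial

/-- Two vertices `u`, `v` are `X`-visible in `G` if some shortest `u`\u2013`v` path
has no internal vertex in `X`. -/
def SimpleGraph.XVisible {V : Type*} (G : SimpleGraph V) (X : Set V) (u v : V) : Prop :=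
  ∃ p : G.Walk u v, p.IsPath ∧ p.length = G.dist u v ∧
    ∀ w ∈ p.support, w ∈ X → w = u ∨ w = v

/-- `X` is a mutual-visibility set of `G`. -/
def SimpleGraph.IsMutualVisibilitySet {V : Type*} (G : SimpleGraph V) (X : Set V) : Prop :=
  ∀ u ∈ X, ∀ v ∈ X, G.XVisible X u v


open scoped Classical in
/-- The number of mutual-visibility sets of cardinality `i` in `K_{m,n}`. -/
noncomputable def mvCountBip (m n i : ℕ) : ℕ :=
  (Finset.univ.filter (fun X : Finset (Fin m ⊕ Fin n) =>
    X.card = i ∧ (completeBipartiteGraph (Fin m) (Fin n)).IsMutualVisibilitySet ↑X)).card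

section Aux

open Finset Sum

lemma mv_char (m n : ℕ) (X : Finset (Fin m ⊕ Fin n)) :
    (completeBipartiteGraph (Fin m) (Fin n)).IsMutualVisibilitySet ↑X ↔
      ((X.toLeft.card ≤ 1 ∨ X.toRight.card < n) ∧
       (X.toRight.card ≤ 1 ∨ X.toLeft.card < m)) := by
  set G := completeBipartiteGraph (Fin m) (Fin n) with hG
  constructor
  · intro hMV
    constructor
    · by_contra h
      push_neg at h
      obtain ⟨h1, h2⟩ := h
      obtain ⟨a, ha, b, hb, hab⟩ := Finset.one_lt_card.mp h1
      have hXa : (inl a : Fin m ⊕ Fin n) ∈ (↑X : Set _) := by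
        simpa using Finset.mem_toLeft.mp ha
      have hXb : (inl b : Fin m ⊕ Fin n) ∈ (↑X : Set _) := by
        simpa using Finset.mem_toLeft.mp hb
      obtain ⟨p, hp, hlen, hint⟩ := hMV _ hXa _ hXb
      have hpos : 0 < p.length := by
        rcases Nat.eq_zero_or_pos p.length with h0 | h0
        · exact absurd (Walk.eq_of_length_eq_zero h0) (by simp [hab])
        · exact h0
      have hadj := p.adj_getVert_succ hpos
      rw [p.getVert_zero] at hadj
      set w := p.getVert 1 with hw
      obtain ⟨c, hc⟩ : ∃ c, w = inr c := by
        cases hwc : w with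
        | inl c => rw [hwc] at hadj; simp [hG] at hadj
        | inr c => exact ⟨c, rfl⟩
      have hws : w ∈ p.support :=
        Walk.mem_support_iff_exists_getVert.mpr ⟨1, rfl, hpos⟩
      have hwX : w ∈ (↑X : Set _) := by
        rw [hc]
        have : X.toRight = Finset.univ := by
          apply Finset.card_eq_iff_eq_univ _ |>.mp
          have := X.toRight.card_le_univ
          simp at this ⊢
          omega
        simp [← Finset.mem_toRight, this]
      rcases hint w hws hwX with h | h <;> simp [hc] at h
    · by_contra h
      push_neg at h
      obtain ⟨h1, h2⟩ := h
      obtain ⟨a, ha, b, hb, hab⟩ := Finset.one_lt_card.mp h1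
      have hXa : (inr a : Fin m ⊕ Fin n) ∈ (↑X : Set _) := by
        simpa using Finset.mem_toRight.mp ha
      have hXb : (inr b : Fin m ⊕ Fin n) ∈ (↑X : Set _) := by
        simpa using Finset.mem_toRight.mp hb
      obtain ⟨p, hp, hlen, hint⟩ := hMV _ hXa _ hXb
      have hpos : 0 < p.length := by
        rcases Nat.eq_zero_or_pos p.length with h0 | h0
        · exact absurd (Walk.eq_of_length_eq_zero h0) (by simp [hab])
        · exact h0
      have hadj := p.adj_getVert_succ hpos
      rw [p.getVert_zero] at hadj
      set w := p.getVert 1 with hw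
      obtain ⟨c, hc⟩ : ∃ c, w = inl c := by
        cases hwc : w with
        | inr c => rw [hwc] at hadj; simp [hG] at hadj
        | inl c => exact ⟨c, rfl⟩
      have hws : w ∈ p.support :=
        Walk.mem_support_iff_exists_getVert.mpr ⟨1, rfl, hpos⟩
      have hwX : w ∈ (↑X : Set _) := by
        rw [hc]
        have : X.toLeft = Finset.univ := by
          apply Finset.card_eq_iff_eq_univ _ |>.mp
          have := X.toLeft.card_le_univ
          simp at this ⊢
          omega
        simp [← Finset.mem_toLeft, this]
      rcases hint w hws hwX with h | h <;> simp [hc] at h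
  · rintro ⟨hA, hB⟩ u hu v hv
    match u, v with
    | inl a, inl b =>
      rcases eq_or_ne a b with rfl | hab
      · exact ⟨Walk.nil, Walk.IsPath.nil, by simp [SimpleGraph.dist_self], by simp⟩
      · have hcard : 1 < X.toLeft.card := by
          apply Finset.one_lt_card.mpr
          exact ⟨a, Finset.mem_toLeft.mpr hu, b, Finset.mem_toLeft.mpr hv, hab⟩
        have hlt : X.toRight.card < n := by rcases hA with h | h; omega; exact h
        obtain ⟨c, hc⟩ : ∃ c, c ∉ X.toRight := by
          by_contra h
          push_neg at h
          have := Finset.eq_univ_iff_forall.mpr h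
          rw [this] at hlt
          simp at hlt
        have h1 : G.Adj (inl a) (inr c) := by simp [hG]
        have h2 : G.Adj (inr c) (inl b) := by simp [hG]
        refine ⟨Walk.cons h1 (Walk.cons h2 Walk.nil), ?_, ?_, ?_⟩
        · simp [Walk.isPath_def, hab]
        · have hle : G.dist (inl a) (inl b) ≤ 2 := by
            simpa using G.dist_le (Walk.cons h1 (Walk.cons h2 Walk.nil))
          have h0 : G.dist (inl a) (inl b) ≠ 0 := by
            intro h
            rcases (G.dist_eq_zero_iff_eq_or_not_reachable).mp h with h' | h'
            · simp at h'; exact hab h'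
            · exact h' (Walk.cons h1 (Walk.cons h2 Walk.nil)).reachable
          have hne1 : G.dist (inl a) (inl b) ≠ 1 := by
            intro h
            have := dist_eq_one_iff_adj.mp h
            simp [hG] at this
          simp; omega
        · intro w hws hwX
          simp [Walk.support_cons] at hws
          rcases hws with rfl | rfl | rfl
          · exact Or.inl rfl
          · exact absurd (Finset.mem_toRight.mpr hwX) hc
          · exact Or.inr rfl
    | inl a, inr b =>
      have h1 : G.Adj (inl a) (inr b) := by simp [hG]
      refine ⟨Walk.cons h1 Walk.nil, ?_, ?_, ?_⟩
      · simp [Walk.isPath_def]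
      · exact (dist_eq_one_iff_adj.mpr h1).symm
      · intro w hws _
        simp [Walk.support_cons] at hws
        rcases hws with rfl | rfl
        · exact Or.inl rfl
        · exact Or.inr rfl
    | inr a, inl b =>
      have h1 : G.Adj (inr a) (inl b) := by simp [hG]
      refine ⟨Walk.cons h1 Walk.nil, ?_, ?_, ?_⟩
      · simp [Walk.isPath_def]
      · exact (dist_eq_one_iff_adj.mpr h1).symm
      · intro w hws _
        simp [Walk.support_cons] at hws
        rcases hws with rfl | rfl
        · exact Or.inl rfl
        · exact Or.inr rfl
    | inr a, inr b =>
      rcases eq_or_ne a b with rfl | hab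
      · exact ⟨Walk.nil, Walk.IsPath.nil, by simp [SimpleGraph.dist_self], by simp⟩
      · have hcard : 1 < X.toRight.card := by
          apply Finset.one_lt_card.mpr
          exact ⟨a, Finset.mem_toRight.mpr hu, b, Finset.mem_toRight.mpr hv, hab⟩
        have hlt : X.toLeft.card < m := by rcases hB with h | h; omega; exact h
        obtain ⟨c, hc⟩ : ∃ c, c ∉ X.toLeft := by
          by_contra h
          push_neg at h
          have := Finset.eq_univ_iff_forall.mpr h
          rw [this] at hlt
          simp at hlt
        have h1 : G.Adj (inr a) (inl c) := by simp [hG]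
        have h2 : G.Adj (inl c) (inr b) := by simp [hG]
        refine ⟨Walk.cons h1 (Walk.cons h2 Walk.nil), ?_, ?_, ?_⟩
        · simp [Walk.isPath_def, hab]
        · have hle : G.dist (inr a) (inr b) ≤ 2 := by
            simpa using G.dist_le (Walk.cons h1 (Walk.cons h2 Walk.nil))
          have h0 : G.dist (inr a) (inr b) ≠ 0 := by
            intro h
            rcases (G.dist_eq_zero_iff_eq_or_not_reachable).mp h with h' | h'
            · simp at h'; exact hab h'
            · exact h' (Walk.cons h1 (Walk.cons h2 Walk.nil)).reachable
          have hne1 : G.dist (inr a) (inr b) ≠ 1 := by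
            intro h
            have := dist_eq_one_iff_adj.mp h
            simp [hG] at this
          simp; omega
        · intro w hws hwX
          simp [Walk.support_cons] at hws
          rcases hws with rfl | rfl | rfl
          · exact Or.inl rfl
          · exact absurd (Finset.mem_toLeft.mpr hwX) hc
          · exact Or.inr rfl

open scoped Classical in
lemma count_cardEq (α : Type*) [Fintype α] (i : ℕ) :
    (Finset.univ.filter fun s : Finset α => s.card = i).card = (Fintype.card α).choose i := by
  have := Finset.card_powersetCard i (Finset.univ : Finset α)
  rwa [Finset.powersetCard_eq_filter, Finset.powerset_univ, Finset.card_univ] at this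

open scoped Classical in
lemma count_leftFull (m n i : ℕ) (hmi : m ≤ i) :
    (Finset.univ.filter fun X : Finset (Fin m ⊕ Fin n) =>
        X.card = i ∧ X.toLeft = Finset.univ).card = n.choose (i - m) := by
  have key : (Finset.univ.filter fun X : Finset (Fin m ⊕ Fin n) =>
        X.card = i ∧ X.toLeft = Finset.univ).card
      = (Finset.univ.filter fun T : Finset (Fin n) => T.card = i - m).card := by
    apply Finset.card_nbij' (fun X => X.toRight) (fun T => Finset.univ.disjSum T)
    · intro X hX
      simp only [Finset.mem_coe, Finset.mem_filter, Finset.mem_univ, true_and] at hX ⊢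
      obtain ⟨h1, h2⟩ := hX
      have := X.card_toLeft_add_card_toRight
      rw [h2] at this
      simp [Finset.card_univ] at this
      omega
    · intro T hT
      simp only [Finset.mem_coe, Finset.mem_filter, Finset.mem_univ, true_and] at hT ⊢
      constructor
      · rw [Finset.card_disjSum, Finset.card_univ]
        simp [hT]
        omega
      · simp
    · intro X hX
      simp only [Finset.mem_coe, Finset.mem_filter, Finset.mem_univ, true_and] at hX
      rw [← hX.2]
      exact X.toLeft_disjSum_toRight
    · intro T hT
      simp
  rw [key, count_cardEq, Fintype.card_fin]

open scoped Classical in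
lemma count_rightFull (m n i : ℕ) (hni : n ≤ i) :
    (Finset.univ.filter fun X : Finset (Fin m ⊕ Fin n) =>
        X.card = i ∧ X.toRight = Finset.univ).card = m.choose (i - n) := by
  have key : (Finset.univ.filter fun X : Finset (Fin m ⊕ Fin n) =>
        X.card = i ∧ X.toRight = Finset.univ).card
      = (Finset.univ.filter fun T : Finset (Fin m) => T.card = i - n).card := by
    apply Finset.card_nbij' (fun X => X.toLeft) (fun T => T.disjSum Finset.univ)
    · intro X hX
      simp only [Finset.mem_coe, Finset.mem_filter, Finset.mem_univ, true_and] at hX ⊢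
      obtain ⟨h1, h2⟩ := hX
      have := X.card_toLeft_add_card_toRight
      rw [h2] at this
      simp [Finset.card_univ] at this
      omega
    · intro T hT
      simp only [Finset.mem_coe, Finset.mem_filter, Finset.mem_univ, true_and] at hT ⊢
      constructor
      · rw [Finset.card_disjSum, Finset.card_univ]
        simp [hT]
        omega
      · simp
    · intro X hX
      simp only [Finset.mem_coe, Finset.mem_filter, Finset.mem_univ, true_and] at hX
      rw [← hX.2]
      exact X.toLeft_disjSum_toRight
    · intro T hT
      simp
  rw [key, count_cardEq, Fintype.card_fin]

open scoped Classical in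
lemma mvCountBip_range1 (m n i : ℕ) (hm : 3 ≤ m) (hmn : m ≤ n) (h2 : i ≤ m + 1) :
    mvCountBip m n i = (m + n).choose i := by
  rw [mvCountBip]
  have hset : (Finset.univ.filter (fun X : Finset (Fin m ⊕ Fin n) =>
      X.card = i ∧ (completeBipartiteGraph (Fin m) (Fin n)).IsMutualVisibilitySet ↑X))
      = Finset.univ.filter (fun X : Finset (Fin m ⊕ Fin n) => X.card = i) := by
    ext X
    simp only [Finset.mem_filter, Finset.mem_univ, true_and, and_iff_left_iff_imp]
    intro hc
    rw [mv_char]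
    have f1 := X.card_toLeft_add_card_toRight
    have f2 : X.toLeft.card ≤ m := by simpa using X.toLeft.card_le_univ
    have f3 : X.toRight.card ≤ n := by simpa using X.toRight.card_le_univ
    omega
  rw [hset, count_cardEq]
  simp

open scoped Classical in
lemma mvCountBip_range2 (m n i : ℕ) (hm : 3 ≤ m) (hmn : m ≤ n)
    (h1 : m + 2 ≤ i) (h2 : i ≤ n + 1) :
    mvCountBip m n i = (m + n).choose i - n.choose (i - m) := by
  have key := Finset.card_filter_add_card_filter_not
    (s := Finset.univ.filter (fun X : Finset (Fin m ⊕ Fin n) => X.card = i))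
    (p := fun X : Finset (Fin m ⊕ Fin n) =>
      (completeBipartiteGraph (Fin m) (Fin n)).IsMutualVisibilitySet ↑X)
  rw [Finset.filter_filter, Finset.filter_filter] at key
  have hbad : (Finset.univ.filter (fun X : Finset (Fin m ⊕ Fin n) =>
        X.card = i ∧ ¬ (completeBipartiteGraph (Fin m) (Fin n)).IsMutualVisibilitySet ↑X))
      = Finset.univ.filter (fun X : Finset (Fin m ⊕ Fin n) =>
        X.card = i ∧ X.toLeft = Finset.univ) := by
    ext X
    simp only [Finset.mem_filter, Finset.mem_univ, true_and, and_congr_right_iff]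
    intro hc
    rw [mv_char, ← Finset.card_eq_iff_eq_univ, Fintype.card_fin]
    have f1 := X.card_toLeft_add_card_toRight
    have f2 : X.toLeft.card ≤ m := by simpa using X.toLeft.card_le_univ
    have f3 : X.toRight.card ≤ n := by simpa using X.toRight.card_le_univ
    omega
  rw [hbad, count_leftFull m n i (by omega), count_cardEq] at key
  simp only [Fintype.card_sum, Fintype.card_fin] at key
  rw [mvCountBip]
  omega

open scoped Classical in
lemma mvCountBip_range3 (m n i : ℕ) (hm : 3 ≤ m) (hmn : m ≤ n)
    (h1 : n + 2 ≤ i) (h2 : i ≤ m + n - 2) :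
    mvCountBip m n i = (m + n).choose i - n.choose (i - m) - m.choose (i - n) := by
  have key := Finset.card_filter_add_card_filter_not
    (s := Finset.univ.filter (fun X : Finset (Fin m ⊕ Fin n) => X.card = i))
    (p := fun X : Finset (Fin m ⊕ Fin n) =>
      (completeBipartiteGraph (Fin m) (Fin n)).IsMutualVisibilitySet ↑X)
  rw [Finset.filter_filter, Finset.filter_filter] at key
  have hbad : (Finset.univ.filter (fun X : Finset (Fin m ⊕ Fin n) =>
        X.card = i ∧ ¬ (completeBipartiteGraph (Fin m) (Fin n)).IsMutualVisibilitySet ↑X))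
      = (Finset.univ.filter (fun X : Finset (Fin m ⊕ Fin n) =>
          X.card = i ∧ X.toLeft = Finset.univ)) ∪
        (Finset.univ.filter (fun X : Finset (Fin m ⊕ Fin n) =>
          X.card = i ∧ X.toRight = Finset.univ)) := by
    ext X
    simp only [Finset.mem_union, Finset.mem_filter, Finset.mem_univ, true_and]
    constructor
    · rintro ⟨hc, hnmv⟩
      rw [mv_char] at hnmv
      rw [← Finset.card_eq_iff_eq_univ, ← Finset.card_eq_iff_eq_univ,
        Fintype.card_fin, Fintype.card_fin]
      have f1 := X.card_toLeft_add_card_toRight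
      have f2 : X.toLeft.card ≤ m := by simpa using X.toLeft.card_le_univ
      have f3 : X.toRight.card ≤ n := by simpa using X.toRight.card_le_univ
      omega
    · rintro (⟨hc, hfull⟩ | ⟨hc, hfull⟩) <;>
      · refine ⟨hc, ?_⟩
        rw [mv_char]
        rw [← Finset.card_eq_iff_eq_univ, Fintype.card_fin] at hfull
        have f1 := X.card_toLeft_add_card_toRight
        have f2 : X.toLeft.card ≤ m := by simpa using X.toLeft.card_le_univ
        have f3 : X.toRight.card ≤ n := by simpa using X.toRight.card_le_univ
        omega
  have hdisj : Disjoint (Finset.univ.filter (fun X : Finset (Fin m ⊕ Fin n) =>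
        X.card = i ∧ X.toLeft = Finset.univ))
      (Finset.univ.filter (fun X : Finset (Fin m ⊕ Fin n) =>
        X.card = i ∧ X.toRight = Finset.univ)) := by
    rw [Finset.disjoint_left]
    rintro X hX1 hX2
    simp only [Finset.mem_filter, Finset.mem_univ, true_and] at hX1 hX2
    obtain ⟨hc, hL⟩ := hX1
    obtain ⟨-, hR⟩ := hX2
    have f1 := X.card_toLeft_add_card_toRight
    rw [hL] at f1
    rw [hR] at f1
    simp only [Finset.card_univ, Fintype.card_fin] at f1
    omega
  rw [hbad, Finset.card_union_of_disjoint hdisj,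
    count_leftFull m n i (by omega), count_rightFull m n i (by omega), count_cardEq] at key
  simp only [Fintype.card_sum, Fintype.card_fin] at key
  rw [mvCountBip]
  omega

open scoped Classical in
lemma mvCountBip_range4 (m n i : ℕ) (hm : 3 ≤ m) (hmn : m ≤ n) (h1 : m + n - 2 < i) :
    mvCountBip m n i = 0 := by
  rw [mvCountBip]
  rw [Finset.card_eq_zero]
  rw [Finset.filter_eq_empty_iff]
  intro X _
  rintro ⟨hc, hmv⟩
  rw [mv_char] at hmv
  have f1 := X.card_toLeft_add_card_toRight
  have f2 : X.toLeft.card ≤ m := by simpa using X.toLeft.card_le_univ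
  have f3 : X.toRight.card ≤ n := by simpa using X.toRight.card_le_univ
  omega

end Aux

theorem visPoly_completeBipartite (m n : ℕ) (hm : 3 ≤ m) (hmn : m ≤ n) :
    (∀ i, 1 ≤ i → i ≤ m + 1 → mvCountBip m n i = (m + n).choose i) ∧
    (∀ i, m + 2 ≤ i → i ≤ n + 1 → mvCountBip m n i = (m + n).choose i - n.choose (i - m)) ∧
    (∀ i, n + 2 ≤ i → i ≤ m + n - 2 →
      mvCountBip m n i = (m + n).choose i - n.choose (i - m) - m.choose (i - n)) ∧
    (∀ i, m + n - 2 < i → mvCountBip m n i = 0) := by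
  exact ⟨fun i _ h2 => mvCountBip_range1 m n i hm hmn h2,
    fun i h1 h2 => mvCountBip_range2 m n i hm hmn h1 h2,
    fun i h1 h2 => mvCountBip_range3 m n i hm hmn h1 h2,
    fun i h1 => mvCountBip_range4 m n i hm hmn h1⟩
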